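/- arXiv:1104.5369 — 2 statements merged into one kernel-verified Lean document; each statement's English description precedes it below -/
import Mathlib

section
/- Let f : ℝⁿ → ℝ be continuously differentiable with Lipschitz continuous gradient (Lipschitz constant L). If x is a point, α > 0 a step size, and d a unit vector such that f(x + α d) ≥ f(x) (an unsuccessful poll step), then the directional derivative ⟨∇f(x), d⟩ ≥ −(L/2)·α. -/
theorem unsuccessful_poll_step_directional_derivative_bound {n : ℕ}
    (f : EuclideanSpace ℝ (Fin n) → ℝ) (hf : ContDiff ℝ 1 f)
    (L : NNReal) (hL : LipschitzWith L (gradient f))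
    (x d : EuclideanSpace ℝ (Fin n)) (hd : ‖d‖ = 1)
    (α : ℝ) (hα : 0 < α)
    (hpoll : f x ≤ f (x + α • d)) :
    -((L : ℝ) / 2) * α ≤ inner ℝ (gradient f x) d := by
  set c : ℝ := inner ℝ (gradient f x) d with hc
  have hdiff : ∀ p, DifferentiableAt ℝ f p := fun p =>
    (hf.differentiable one_ne_zero) p
  -- derivative of g t = f (x + t • d)
  have hline : ∀ t : ℝ, HasDerivAt (fun s : ℝ => x + s • d) d t := by
    intro t
    simpa using ((hasDerivAt_id t).smul_const d).const_add x
  have hg : ∀ t : ℝ, HasDerivAt (fun s : ℝ => f (x + s • d))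
      (inner ℝ (gradient f (x + t • d)) d) t := by
    intro t
    have h1 := ((hdiff (x + t • d)).hasGradientAt.hasFDerivAt).comp_hasDerivAt t (hline t)
    simpa [InnerProductSpace.toDual_apply_apply, Function.comp_def] using h1
  set h : ℝ → ℝ := fun t => f (x + t • d) - t * c - (L : ℝ) / 2 * t ^ 2 with hh
  have hh' : ∀ t : ℝ, HasDerivAt h
      (inner ℝ (gradient f (x + t • d)) d - c - (L : ℝ) * t) t := by
    intro t
    have h2 : HasDerivAt (fun t : ℝ => (L : ℝ) / 2 * t ^ 2) ((L : ℝ) * t) t := by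
      have := (hasDerivAt_pow 2 t).const_mul ((L : ℝ) / 2)
      refine this.congr_deriv ?_
      norm_num
      ring
    rw [hh]
    simpa [Pi.sub_def] using ((hg t).sub ((hasDerivAt_id t).const_mul c |>.mul_const c |> fun _ => (hasDerivAt_id t).mul_const c)).sub h2
  have hanti : AntitoneOn h (Set.Icc 0 α) := by
    apply antitoneOn_of_deriv_nonpos (convex_Icc 0 α)
    · exact (Differentiable.continuous fun t => (hh' t).differentiableAt).continuousOn
    · intro t _
      exact (hh' t).differentiableAt.differentiableWithinAt
    · intro t ht
      rw [interior_Icc] at ht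
      rw [(hh' t).deriv]
      have hb : inner ℝ (gradient f (x + t • d)) d - c ≤ (L : ℝ) * t := by
        have := real_inner_le_norm (gradient f (x + t • d) - gradient f x) d
        have hlip := hL.dist_le_mul (x + t • d) x
        rw [dist_eq_norm, dist_eq_norm] at hlip
        have hnorm : ‖(x + t • d) - x‖ = |t| := by
          simp [norm_smul, hd]
        rw [hnorm, abs_of_pos ht.1] at hlip
        calc inner ℝ (gradient f (x + t • d)) d - c
            = inner ℝ (gradient f (x + t • d) - gradient f x) d := by
              simp [hc, inner_sub_left]
          _ ≤ ‖gradient f (x + t • d) - gradient f x‖ * ‖d‖ := real_inner_le_norm _ _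
          _ = ‖gradient f (x + t • d) - gradient f x‖ := by rw [hd, mul_one]
          _ = dist (gradient f (x + t • d)) (gradient f x) := (dist_eq_norm _ _).symm
          _ ≤ (L : ℝ) * t := hlip
      linarith
  have key : h α ≤ h 0 :=
    hanti (Set.left_mem_Icc.2 hα.le) (Set.right_mem_Icc.2 hα.le) hα.le
  simp only [hh] at key
  simp only [zero_smul, add_zero, zero_mul, zero_pow, mul_zero, sub_zero] at key
  -- key : f (x + α • d) - α * c - L/2 * α^2 ≤ f x
  have : -((L : ℝ) / 2) * α * α ≤ c * α := by nlinarith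
  have hle := (mul_le_mul_iff_left₀ hα).mp (by nlinarith : -((L : ℝ) / 2) * α * α ≤ c * α)
  linarith [hle]
end

section
/- Let f : ℝⁿ → ℝ be continuously differentiable with L-Lipschitz gradient, let D be a positive spanning set of unit vectors, and suppose for step size α > 0 every poll step is unsuccessful, i.e., f(x + α d) ≥ f(x) for all d ∈ D. Then ‖∇f(x)‖ ≤ (L α)/(2 κ(D)), where κ(D) = min over unit vectors v of max over d ∈ D of ⟨v, d⟩ is the cosine measure of D (assumed positive). -/
open InnerProductSpace

/-- Descent lemma: a function with `L`-Lipschitz gradient satisfies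
`f (x + w) ≤ f x + ⟪∇f x, w⟫ + L/2 ‖w‖²`. -/
lemma descent_aux {n : ℕ} (f : EuclideanSpace ℝ (Fin n) → ℝ) (hf : ContDiff ℝ 1 f)
    (L : NNReal) (hL : LipschitzWith L (gradient f)) (x w : EuclideanSpace ℝ (Fin n)) :
    f (x + w) ≤ f x + inner ℝ (gradient f x) w + (L : ℝ) / 2 * ‖w‖ ^ 2 := by
  have hdf : Differentiable ℝ f := hf.differentiable one_ne_zero
  have key : ∀ y : EuclideanSpace ℝ (Fin n), fderiv ℝ f y w = (inner ℝ (gradient f y) w : ℝ) := by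
    intro y
    rw [gradient, toDual_symm_apply]
  set φ : ℝ → ℝ := fun t =>
    f (x + t • w) - t * inner ℝ (gradient f x) w - (L : ℝ) / 2 * t ^ 2 * ‖w‖ ^ 2 with hφ
  have hc : ∀ t : ℝ, HasDerivAt (fun t : ℝ => x + t • w) w t := by
    intro t
    simpa using ((hasDerivAt_id t).smul_const w).const_add x
  have hderiv : ∀ t : ℝ, HasDerivAt φ
      ((inner ℝ (gradient f (x + t • w)) w : ℝ) - inner ℝ (gradient f x) w
        - (L : ℝ) * t * ‖w‖ ^ 2) t := by
    intro t
    have h1 : HasDerivAt (fun t : ℝ => f (x + t • w))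
        ((inner ℝ (gradient f (x + t • w)) w : ℝ)) t := by
      have := ((hdf (x + t • w)).hasFDerivAt).comp_hasDerivAt t (hc t)
      rwa [key] at this
    have h2 : HasDerivAt (fun t : ℝ => t * (inner ℝ (gradient f x) w : ℝ))
        ((inner ℝ (gradient f x) w : ℝ)) t := by
      simpa using (hasDerivAt_id t).mul_const (inner ℝ (gradient f x) w : ℝ)
    have h3 : HasDerivAt (fun t : ℝ => (L : ℝ) / 2 * t ^ 2 * ‖w‖ ^ 2)
        ((L : ℝ) * t * ‖w‖ ^ 2) t := by
      have := ((hasDerivAt_pow 2 t).const_mul ((L : ℝ) / 2)).mul_const (‖w‖ ^ 2)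
      exact this.congr_deriv (by push_cast; ring)
    exact (h1.sub h2).sub h3
  have hmono : AntitoneOn φ (Set.Icc 0 1) := by
    apply antitoneOn_of_deriv_nonpos (convex_Icc 0 1)
    · exact Continuous.continuousOn (by fun_prop)
    · intro t ht
      exact ((hderiv t).differentiableAt).differentiableWithinAt
    · intro t ht
      rw [interior_Icc] at ht
      rw [(hderiv t).deriv]
      have hlip : ‖gradient f (x + t • w) - gradient f x‖ ≤ (L : ℝ) * (t * ‖w‖) := by
        have := hL.dist_le_mul (x + t • w) x
        rw [dist_eq_norm] at this
        simpa [norm_smul, abs_of_pos ht.1, mul_comm] using this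
      have hcs : (inner ℝ (gradient f (x + t • w)) w : ℝ) - inner ℝ (gradient f x) w
          ≤ (L : ℝ) * t * ‖w‖ ^ 2 := by
        have h1 : (inner ℝ (gradient f (x + t • w)) w : ℝ) - inner ℝ (gradient f x) w
            = inner ℝ (gradient f (x + t • w) - gradient f x) w := by
          rw [inner_sub_left]
        rw [h1]
        calc (inner ℝ (gradient f (x + t • w) - gradient f x) w : ℝ)
            ≤ ‖gradient f (x + t • w) - gradient f x‖ * ‖w‖ := real_inner_le_norm _ _
          _ ≤ (L : ℝ) * (t * ‖w‖) * ‖w‖ := by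
              apply mul_le_mul_of_nonneg_right hlip (norm_nonneg w)
          _ = (L : ℝ) * t * ‖w‖ ^ 2 := by ring
      linarith
  have := hmono (Set.left_mem_Icc.2 zero_le_one) (Set.right_mem_Icc.2 zero_le_one) zero_le_one
  simp only [hφ] at this
  simp only [zero_smul, add_zero, one_smul, zero_mul, sub_zero, one_pow, mul_one,
    zero_pow] at this
  · linarith

/-- The cosine measure of a finite set `D` of vectors:
`κ(D) = min_{‖v‖=1} max_{d ∈ D} ⟨v, d⟩`. -/
noncomputable def cosineMeasure {n : ℕ} (D : Finset (EuclideanSpace ℝ (Fin n))) : ℝ :=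
  ⨅ v : {v : EuclideanSpace ℝ (Fin n) // ‖v‖ = 1}, ⨆ d : D, (inner ℝ v.1 d.1 : ℝ)

theorem gradient_norm_bound_of_unsuccessful_polls {n : ℕ}
    (f : EuclideanSpace ℝ (Fin n) → ℝ) (hf : ContDiff ℝ 1 f)
    (L : NNReal) (hL : LipschitzWith L (gradient f))
    (D : Finset (EuclideanSpace ℝ (Fin n))) (hunit : ∀ d ∈ D, ‖d‖ = 1)
    (hκ : 0 < cosineMeasure D)
    (x : EuclideanSpace ℝ (Fin n)) (α : ℝ) (hα : 0 < α)
    (hpoll : ∀ d ∈ D, f x ≤ f (x + α • d)) :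
    ‖gradient f x‖ ≤ (L : ℝ) * α / (2 * cosineMeasure D) := by
  set g := gradient f x with hg
  -- D is nonempty
  have hDne : D.Nonempty := by
    by_contra h
    rw [Finset.not_nonempty_iff_eq_empty] at h
    subst h
    haveI : IsEmpty ((∅ : Finset (EuclideanSpace ℝ (Fin n))) : Type _) := by
      constructor; rintro ⟨d, hd⟩; simp at hd
    have : cosineMeasure (∅ : Finset (EuclideanSpace ℝ (Fin n))) = 0 := by
      unfold cosineMeasure
      have hs : ∀ v : {v : EuclideanSpace ℝ (Fin n) // ‖v‖ = 1},
          (⨆ d : ((∅ : Finset (EuclideanSpace ℝ (Fin n))) : Type _), (inner ℝ v.1 d.1 : ℝ)) = 0 :=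
        fun v => Real.iSup_of_isEmpty _
      simp only [hs]
      rcases isEmpty_or_nonempty {v : EuclideanSpace ℝ (Fin n) // ‖v‖ = 1} with he | hne
      · exact Real.iInf_of_isEmpty _
      · exact ciInf_const
    rw [this] at hκ
    exact lt_irrefl 0 hκ
  haveI : Nonempty (D : Type _) := Finset.Nonempty.coe_sort hDne
  -- per direction bound : -⟪g, d⟫ ≤ L α / 2
  have hdb : ∀ d ∈ D, -(inner ℝ g d : ℝ) ≤ (L : ℝ) * α / 2 := by
    intro d hd
    have hdesc := descent_aux f hf L hL x (α • d)
    have hnorm : ‖α • d‖ ^ 2 = α ^ 2 := by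
      rw [norm_smul, hunit d hd, mul_one]; simp [Real.norm_eq_abs, sq_abs]
    have hip : (inner ℝ g (α • d) : ℝ) = α * inner ℝ g d := real_inner_smul_right g d α
    have hp := hpoll d hd
    rw [hnorm, hip] at hdesc
    have h2 : 0 ≤ α * (inner ℝ g d : ℝ) + (L : ℝ) / 2 * α ^ 2 := by linarith
    have h3 : α * (-(inner ℝ g d : ℝ)) ≤ α * ((L : ℝ) * α / 2) := by nlinarith
    exact le_of_mul_le_mul_left h3 hα
  rcases eq_or_ne g 0 with h0 | h0
  · rw [h0, norm_zero]
    positivity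
  · have hgpos : 0 < ‖g‖ := norm_pos_iff.2 h0
    set v : EuclideanSpace ℝ (Fin n) := (-‖g‖⁻¹) • g with hv
    have hvnorm : ‖v‖ = 1 := by
      rw [hv, norm_smul, Real.norm_eq_abs, abs_neg, abs_of_pos (by positivity), inv_mul_cancel₀ hgpos.ne']
    -- κ ≤ sup over d of ⟪v, d⟫
    have hbdd : BddBelow (Set.range fun u : {u : EuclideanSpace ℝ (Fin n) // ‖u‖ = 1} =>
        ⨆ d : D, (inner ℝ u.1 d.1 : ℝ)) := by
      refine ⟨-1, ?_⟩
      rintro r ⟨u, rfl⟩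
      obtain ⟨d₀, hd₀⟩ := hDne
      have hle : (-1 : ℝ) ≤ inner ℝ u.1 d₀ := by
        have := abs_real_inner_le_norm u.1 d₀
        rw [u.2, hunit d₀ hd₀, mul_one] at this
        linarith [neg_abs_le (inner ℝ u.1 d₀ : ℝ)]
      exact le_trans hle (le_ciSup (f := fun d : D => (inner ℝ u.1 d.1 : ℝ))
        (Set.Finite.bddAbove (Set.finite_range _)) (⟨d₀, hd₀⟩ : D))
    have hκle : cosineMeasure D ≤ ⨆ d : D, (inner ℝ v d.1 : ℝ) :=
      ciInf_le hbdd (⟨v, hvnorm⟩ : {u : EuclideanSpace ℝ (Fin n) // ‖u‖ = 1})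
    have hsup : (⨆ d : D, (inner ℝ v d.1 : ℝ)) ≤ (L : ℝ) * α / 2 / ‖g‖ := by
      apply ciSup_le
      intro d
      have : (inner ℝ v d.1 : ℝ) = ‖g‖⁻¹ * (-(inner ℝ g d.1 : ℝ)) := by
        rw [hv, real_inner_smul_left]; ring
      rw [this, div_eq_inv_mul ((L:ℝ)*α/2) ‖g‖]
      exact mul_le_mul_of_nonneg_left (hdb d.1 d.2) (by positivity)
    have hmain : cosineMeasure D * ‖g‖ ≤ (L : ℝ) * α / 2 := by
      have := le_trans hκle hsup
      rw [le_div_iff₀ hgpos] at this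
      linarith
    rw [le_div_iff₀ (by positivity)]
    nlinarith
end
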